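/- Let M be the good map of a directed graph G over N ⊆ V_G, and let N' ⊆ N. Then the good map of G over N' equals the good map of M over N' (i.e., taking good maps is transitive/compositional: a good map of a good map is the good map over the smaller vertex set). -/
import Mathlib


/-- A nonempty directed path from `u` to `v` in the graph with edge relation `E`,
all of whose intermediate nodes avoid the set `N`. -/
inductive AvoidPath {V : Type*} (E : V → V → Prop) (N : Set V) : V → V → Prop
  | single {u v : V} : E u v → AvoidPath E N u v
  | cons {u w v : V} : E u w → w ∉ N → AvoidPath E N w v → AvoidPath E N u v

/-- Edges of the good map of `(V, E)` over the distinguished node set `N`: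
exactly the pairs `x, y ∈ N` with `x ↠_N y` in `G`. -/
def goodMapEdges {V : Type*} (E : V → V → Prop) (N : Set V) : V → V → Prop :=
  fun x y => x ∈ N ∧ y ∈ N ∧ AvoidPath E N x y

/-- The good map of `(V, E)` over `N`, as a pair (vertex set, edge relation). -/
def goodMap {V : Type*} (E : V → V → Prop) (N : Set V) : Set V × (V → V → Prop) :=
  (N, goodMapEdges E N)

/-- `M = (VM, EM)` is a map of `(V, E)`: its vertices lie in `V`, and every edge
`(x, y)` of `M` joins vertices of `M` connected by a directed path in `G`. -/
def IsMap {V : Type*} (E : V → V → Prop) (VM : Set V) (EM : V → V → Prop) : Prop :=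
  ∀ x y, EM x y → x ∈ VM ∧ y ∈ VM ∧ Relation.TransGen E x y

/-- `M` is complete: paths between map nodes in `G` imply paths in `M`. -/
def MapComplete {V : Type*} (E : V → V → Prop) (VM : Set V) (EM : V → V → Prop) : Prop :=
  ∀ x y, x ∈ VM → y ∈ VM → Relation.TransGen E x y → Relation.TransGen EM x y

/-- `M` is route-complete: `x ↠_{V_M} y` in `G` implies edge `(x,y)` in `M`. -/
def RouteComplete {V : Type*} (E : V → V → Prop) (VM : Set V) (EM : V → V → Prop) : Prop :=
  ∀ x y, x ∈ VM → y ∈ VM → AvoidPath E VM x y → EM x y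

/-- `M` is non-redundant: edge `(x,y)` in `M` implies `x ↠_{V_M} y` in `G`. -/
def NonRedundant {V : Type*} (E : V → V → Prop) (VM : Set V) (EM : V → V → Prop) : Prop :=
  ∀ x y, x ∈ VM → y ∈ VM → EM x y → AvoidPath E VM x y

/-- `M` is a good map: a map that is complete, route-complete and non-redundant. -/
def GoodMap {V : Type*} (E : V → V → Prop) (VM : Set V) (EM : V → V → Prop) : Prop :=
  IsMap E VM EM ∧ MapComplete E VM EM ∧ RouteComplete E VM EM ∧ NonRedundant E VM EM

lemma AvoidPath.mono' {V : Type*} {E : V → V → Prop} {N N' : Set V} (h : N' ⊆ N)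
    {u v : V} (p : AvoidPath E N u v) : AvoidPath E N' u v := by
  induction p with
  | single e => exact .single e
  | cons e hw _ ih => exact .cons e (fun hn => hw (h hn)) ih

lemma AvoidPath.append' {V : Type*} {E : V → V → Prop} {S : Set V} {u w v : V}
    (p : AvoidPath E S u w) (hw : w ∉ S) (q : AvoidPath E S w v) : AvoidPath E S u v := by
  induction p with
  | single e => exact .cons e hw q
  | cons e hx _ ih => exact .cons e hx (ih hw q)

lemma goodMap_key {V : Type*} {E : V → V → Prop} {N N' : Set V} (h : N' ⊆ N)
    {w y : V} (p : AvoidPath E N' w y) (hy : y ∈ N) :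
    ∃ z, z ∈ N ∧ AvoidPath E N w z ∧
      (z = y ∨ (z ∉ N' ∧ AvoidPath (goodMapEdges E N) N' z y)) := by
  induction p with
  | @single u v e => exact ⟨v, hy, .single e, Or.inl rfl⟩
  | @cons u w v e hw _ ih =>
    obtain ⟨z, hz, pz, hrest⟩ := ih hy
    by_cases hwN : w ∈ N
    · refine ⟨w, hwN, .single e, Or.inr ⟨hw, ?_⟩⟩
      rcases hrest with rfl | ⟨hzN', pm⟩
      · exact .single ⟨hwN, hz, pz⟩
      · exact .cons ⟨hwN, hz, pz⟩ hzN' pm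
    · exact ⟨z, hz, .cons e hwN pz, hrest⟩

theorem goodMap_compositional (V : Type*) (E : V → V → Prop) (N N' : Set V)
    (h : N' ⊆ N) :
    goodMapEdges E N' = goodMapEdges (goodMapEdges E N) N' := by
  ext x y
  constructor
  · rintro ⟨hx, hy, p⟩
    refine ⟨hx, hy, ?_⟩
    obtain ⟨z, hz, pz, hrest⟩ := goodMap_key h p (h hy)
    rcases hrest with rfl | ⟨hzN', pm⟩
    · exact .single ⟨h hx, hz, pz⟩
    · exact .cons ⟨h hx, hz, pz⟩ hzN' pm
  · rintro ⟨hx, hy, p⟩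
    refine ⟨hx, hy, ?_⟩
    clear hx hy
    induction p with
    | single e => exact e.2.2.mono' h
    | cons e hw _ ih => exact (e.2.2.mono' h).append' hw ih
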